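/- Let ω be a locally finite positive Borel measure on ℝⁿ and 𝒟 a dyadic grid. Suppose {g_J}_{J ∈ 𝒟} are functions with g_J supported in J, ∫ g_J dω = 0, and for each J' ⊊ J with ℓ(J') = 2^{-m} ℓ(J) one has |∫ g_J g_{J'} dω| ≤ 2^{-m} √(|J'|_ω/|J|_ω) ‖g_{J'}‖_{L²(ω)} ‖g_J‖_{L²(ω)}, while for incomparable J, J' the supports are disjoint. Then ‖Σ_J g_J‖_{L²(ω)}² ≤ C Σ_J ‖g_J‖_{L²(ω)}², with C an absolute constant (given a fixed dimension n). -/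

import Mathlib

open MeasureTheory ENNReal

noncomputable section

/-- The standard dyadic cube of scale `2^k` at position `m`. -/
def DyadicCube (n : ℕ) (k : ℤ) (m : Fin n → ℤ) : Set (Fin n → ℝ) :=
  {x | ∀ i, (m i : ℝ) * 2 ^ k ≤ x i ∧ x i < ((m i : ℝ) + 1) * 2 ^ k}

namespace AO



lemma floor_scale {k k' a : ℤ} (hk : k' ≤ k) {y : ℝ}
    (h1 : (a:ℝ) * 2^k' ≤ y) (h2 : y < ((a:ℝ)+1) * 2^k') :
    ⌊y / (2:ℝ)^k⌋ = a / 2^(k-k').toNat := by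
  have hdk : ((k - k').toNat : ℤ) = k - k' := Int.toNat_of_nonneg (by omega)
  set d : ℕ := (k - k').toNat with hdd
  set q : ℤ := a / 2^d with hq
  have h2dz : (0:ℤ) < 2^d := by positivity
  have hr0 : 0 ≤ a % 2^d := Int.emod_nonneg a (by positivity)
  have hr1 : a % 2^d < 2^d := Int.emod_lt_of_pos a h2dz
  have ha : 2^d * q + a % 2^d = a := Int.mul_ediv_add_emod a (2^d)
  have h2k : (0:ℝ) < (2:ℝ)^k := by positivity
  have h2d : (0:ℝ) < (2:ℝ)^(d:ℤ) := by positivity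
  have hk' : (2:ℝ)^k' = 2^k / 2^(d:ℤ) := by
    rw [← zpow_sub₀ (by norm_num : (2:ℝ) ≠ 0)]
    congr 1; omega
  have hqa : (q:ℝ) * 2^(d:ℤ) ≤ (a:ℝ) := by
    have h : (2^d * q : ℤ) ≤ a := by omega
    have h2 : ((2:ℝ)^d) * (q:ℝ) ≤ (a:ℝ) := by exact_mod_cast h
    rw [zpow_natCast]
    linarith
  have hqa' : (a:ℝ) + 1 ≤ ((q:ℝ)+1) * 2^(d:ℤ) := by
    have h : (a + 1 : ℤ) ≤ 2^d * (q+1) := by nlinarith [ha, hr1]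
    have h2 : ((a:ℝ)+1) ≤ ((2:ℝ)^d) * ((q:ℝ)+1) := by exact_mod_cast h
    rw [zpow_natCast]
    linarith
  rw [Int.floor_eq_iff]
  constructor
  · rw [le_div_iff₀ h2k]
    have : (q:ℝ) * 2^k = (q * 2^(d:ℤ)) * 2^k' := by
      rw [hk']; field_simp
    nlinarith [mul_le_mul_of_nonneg_right hqa (le_of_lt (by positivity : (0:ℝ) < 2^k'))]
  · rw [div_lt_iff₀ h2k]
    have hlt : y < ((q:ℝ)+1) * 2^(d:ℤ) * 2^k' := by
      nlinarith [mul_le_mul_of_nonneg_right hqa' (le_of_lt (by positivity : (0:ℝ) < 2^k'))]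
    have : ((q:ℝ)+1) * 2^(d:ℤ) * 2^k' = ((q:ℝ)+1) * 2^k := by
      rw [hk']; field_simp
    push_cast
    linarith [hlt, this.symm ▸ hlt]

lemma mem_cube_iff_floor {n : ℕ} {k : ℤ} {m : Fin n → ℤ} {x : Fin n → ℝ} :
    x ∈ DyadicCube n k m ↔ ∀ i, ⌊x i / (2:ℝ)^k⌋ = m i := by
  have h2k : (0:ℝ) < (2:ℝ)^k := by positivity
  constructor
  · intro hx i
    rw [Int.floor_eq_iff]
    obtain ⟨h1, h2⟩ := hx i
    constructor
    · rw [le_div_iff₀ h2k]; linarith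
    · rw [div_lt_iff₀ h2k]; push_cast; linarith
  · intro h i
    have := (Int.floor_eq_iff).1 (h i)
    obtain ⟨h1, h2⟩ := this
    rw [le_div_iff₀ h2k] at h1
    rw [div_lt_iff₀ h2k] at h2
    push_cast at h2
    exact ⟨by linarith, by linarith⟩

lemma cube_nonempty {n : ℕ} (k : ℤ) (m : Fin n → ℤ) :
    (fun i => (m i : ℝ) * 2^k) ∈ DyadicCube n k m := by
  intro i
  have h2k : (0:ℝ) < (2:ℝ)^k := by positivity
  refine ⟨le_of_eq rfl, ?_⟩
  dsimp only
  nlinarith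

lemma cube_disjoint_same_scale {n : ℕ} {k : ℤ} {m m' : Fin n → ℤ} (h : m ≠ m') :
    Disjoint (DyadicCube n k m) (DyadicCube n k m') := by
  rw [Set.disjoint_left]
  intro x hx hx'
  apply h
  funext i
  rw [← mem_cube_iff_floor.1 hx i, ← mem_cube_iff_floor.1 hx' i]

lemma cube_nested_of_inter {n : ℕ} {k k' : ℤ} {m m' : Fin n → ℤ} (hk : k' < k)
    (hne : ¬ Disjoint (DyadicCube n k' m') (DyadicCube n k m)) :
    DyadicCube n k' m' ⊆ DyadicCube n k m := by
  rw [Set.not_disjoint_iff] at hne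
  obtain ⟨z, hz', hz⟩ := hne
  intro y hy
  rw [mem_cube_iff_floor]
  intro i
  have h1 : ⌊y i / (2:ℝ)^k⌋ = m' i / 2^(k-k').toNat :=
    floor_scale hk.le (hy i).1 (hy i).2
  have h2 : ⌊z i / (2:ℝ)^k⌋ = m' i / 2^(k-k').toNat :=
    floor_scale hk.le (hz' i).1 (hz' i).2
  rw [h1, ← h2, mem_cube_iff_floor.1 hz i]





lemma cube_measurable {n : ℕ} (k : ℤ) (m : Fin n → ℤ) :
    MeasurableSet (DyadicCube n k m) := by
  have h : DyadicCube n k m = ⋂ i, (fun x : Fin n → ℝ => x i) ⁻¹'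
      Set.Ico ((m i : ℝ) * 2^k) (((m i : ℝ)+1) * 2^k) := by
    ext x
    simp [DyadicCube, Set.mem_iInter, Set.mem_Ico]
  rw [h]
  exact MeasurableSet.iInter fun i => (measurable_pi_apply i) measurableSet_Ico

lemma cube_measure_lt_top {n : ℕ} (ω : Measure (Fin n → ℝ)) [IsLocallyFiniteMeasure ω]
    (k : ℤ) (m : Fin n → ℤ) : ω (DyadicCube n k m) < ⊤ := by
  have hsub : DyadicCube n k m ⊆ Set.pi Set.univ
      (fun i => Set.Icc ((m i : ℝ) * 2^k) (((m i : ℝ)+1) * 2^k)) := by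
    intro x hx i _
    exact ⟨(hx i).1, (hx i).2.le⟩
  have hcomp : IsCompact (Set.pi Set.univ
      (fun i => Set.Icc ((m i : ℝ) * 2^k) (((m i : ℝ)+1) * 2^k))) :=
    isCompact_univ_pi fun i => isCompact_Icc
  exact lt_of_le_of_lt (measure_mono hsub) hcomp.measure_lt_top

/-- Geometric sum over a finite set of negative integers. -/
lemma sum_zpow_neg_le_one (T : Finset ℤ) (hT : ∀ e ∈ T, e < 0) :
    ∑ e ∈ T, (2:ℝ)^e ≤ 1 := by
  classical
  have key : ∀ e ∈ T, (2:ℝ)^e = (1/2:ℝ)^((-e-1).toNat + 1) := by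
    intro e he
    have h1 : ((-e-1).toNat : ℤ) = -e-1 := Int.toNat_of_nonneg (by have := hT e he; omega)
    have h2 : (2:ℝ)^e = ((2:ℝ)^((-e-1).toNat+1))⁻¹ := by
      rw [← zpow_natCast (2:ℝ) ((-e-1).toNat+1), ← zpow_neg]
      congr 1
      push_cast [h1]
      omega
    rw [h2, div_pow, one_pow, one_div]
  rw [Finset.sum_congr rfl key]
  have hinj : ∀ x ∈ T, ∀ y ∈ T, (-x-1).toNat + 1 = (-y-1).toNat + 1 → x = y := by
    intro x hx y hy h
    have h1 : ((-x-1).toNat : ℤ) = -x-1 := Int.toNat_of_nonneg (by have := hT x hx; omega)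
    have h2 : ((-y-1).toNat : ℤ) = -y-1 := Int.toNat_of_nonneg (by have := hT y hy; omega)
    omega
  rw [← Finset.sum_image hinj]
  set I := T.image (fun e => (-e-1).toNat + 1) with hI
  have hsub : I ⊆ Finset.range (I.sup id + 1) := by
    intro x hx
    simp only [Finset.mem_range]
    have h := Finset.le_sup (f := id) hx
    simp only [id] at h
    omega
  have h0 : ∀ x ∈ I, (1:ℕ) ≤ x := by
    intro x hx
    simp only [hI, Finset.mem_image] at hx
    obtain ⟨e, _, rfl⟩ := hx
    omega
  calc ∑ x ∈ I, (1/2:ℝ)^x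
      ≤ ∑ x ∈ (Finset.range (I.sup id + 1)).filter (1 ≤ ·), (1/2:ℝ)^x := by
        apply Finset.sum_le_sum_of_subset_of_nonneg
        · intro x hx
          simp only [Finset.mem_filter]
          exact ⟨hsub hx, h0 x hx⟩
        · intros; positivity
    _ ≤ 1 := by
        have : ∑ x ∈ (Finset.range (I.sup id + 1)).filter (1 ≤ ·), (1/2:ℝ)^x
            = ∑ x ∈ Finset.range (I.sup id + 1), (1/2:ℝ)^x - 1 := by
          rw [← Finset.sum_filter_add_sum_filter_not (Finset.range (I.sup id + 1)) (1 ≤ ·)]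
          have : (Finset.range (I.sup id + 1)).filter (fun x => ¬ 1 ≤ x) = {0} := by
            ext x
            simp only [Finset.mem_filter, Finset.mem_range, Finset.mem_singleton]
            omega
          rw [this]
          simp
        rw [this]
        have := sum_geometric_two_le (I.sup id + 1)
        linarith



lemma geom_aux (K : ℤ) (T : Finset ℤ) (hT : ∀ k ∈ T, k < K) :
    ∑ k ∈ T, (2:ℝ)^(k - K) ≤ 1 := by
  classical
  have hinj : ∀ x ∈ T, ∀ y ∈ T, x - K = y - K → x = y := by intro x _ y _ h; omega
  rw [show (∑ k ∈ T, (2:ℝ)^(k-K)) = ∑ e ∈ T.image (· - K), (2:ℝ)^e from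
    (Finset.sum_image hinj).symm]
  apply sum_zpow_neg_le_one
  intro e he
  obtain ⟨k, hk, rfl⟩ := Finset.mem_image.1 he
  have := hT k hk
  omega

lemma geom_aux' (K : ℤ) (T : Finset ℤ) (hT : ∀ k ∈ T, K < k) :
    ∑ k ∈ T, (2:ℝ)^(K - k) ≤ 1 := by
  classical
  have hinj : ∀ x ∈ T, ∀ y ∈ T, K - x = K - y → x = y := by intro x _ y _ h; omega
  rw [show (∑ k ∈ T, (2:ℝ)^(K-k)) = ∑ e ∈ T.image (K - ·), (2:ℝ)^e from
    (Finset.sum_image hinj).symm]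
  apply sum_zpow_neg_le_one
  intro e he
  obtain ⟨k, hk, rfl⟩ := Finset.mem_image.1 he
  have := hT k hk
  omega

lemma claimA {n : ℕ} (ω : Measure (Fin n → ℝ)) [IsLocallyFiniteMeasure ω]
    (J : ℤ × (Fin n → ℤ)) (F : Finset (ℤ × (Fin n → ℤ)))
    (hF : ∀ J' ∈ F, J'.1 < J.1 ∧ DyadicCube n J'.1 J'.2 ⊆ DyadicCube n J.1 J.2) :
    ∑ J' ∈ F, (2:ℝ)^(J'.1 - J.1) *
      ((ω (DyadicCube n J'.1 J'.2)).toReal / (ω (DyadicCube n J.1 J.2)).toReal) ≤ 1 := by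
  classical
  rw [← Finset.sum_fiberwise_of_maps_to (t := F.image Prod.fst)
    (fun x hx => Finset.mem_image_of_mem _ hx)]
  have step1 : ∀ k' ∈ F.image Prod.fst,
      (∑ J' ∈ F.filter (fun J' => J'.1 = k'), (2:ℝ)^(J'.1 - J.1) *
        ((ω (DyadicCube n J'.1 J'.2)).toReal / (ω (DyadicCube n J.1 J.2)).toReal))
      ≤ (2:ℝ)^(k' - J.1) := by
    intro k' hk'
    set Fib := F.filter (fun J' => J'.1 = k') with hFib
    have hcongr : ∀ J' ∈ Fib, (2:ℝ)^(J'.1 - J.1) *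
        ((ω (DyadicCube n J'.1 J'.2)).toReal / (ω (DyadicCube n J.1 J.2)).toReal)
        = (2:ℝ)^(k' - J.1) *
          ((ω (DyadicCube n J'.1 J'.2)).toReal / (ω (DyadicCube n J.1 J.2)).toReal) := by
      intro J' hJ'
      have h : J'.1 = k' := (Finset.mem_filter.1 hJ').2
      rw [h]
    rw [Finset.sum_congr rfl hcongr, ← Finset.mul_sum, ← Finset.sum_div]
    have hdisj : (↑Fib : Set (ℤ × (Fin n → ℤ))).PairwiseDisjoint
        (fun J' => DyadicCube n J'.1 J'.2) := by
      intro a ha b hb hab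
      have ha2 := (Finset.mem_filter.1 (Finset.mem_coe.1 ha)).2
      have hb2 := (Finset.mem_filter.1 (Finset.mem_coe.1 hb)).2
      have h2 : a.2 ≠ b.2 := by
        intro h
        exact hab (Prod.ext (ha2.trans hb2.symm) h)
      have := cube_disjoint_same_scale (n := n) (k := a.1) h2
      simpa [Function.onFun, ha2, hb2] using
        (by rw [show a.1 = b.1 from ha2.trans hb2.symm] at this ⊢; exact this :
          Disjoint (DyadicCube n a.1 a.2) (DyadicCube n a.1 b.2))
    have hfin : ∀ J' ∈ Fib, ω (DyadicCube n J'.1 J'.2) ≠ ⊤ :=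
      fun J' _ => (cube_measure_lt_top ω _ _).ne
    have hsum : (∑ J' ∈ Fib, ω (DyadicCube n J'.1 J'.2)) ≤ ω (DyadicCube n J.1 J.2) := by
      rw [← measure_biUnion_finset hdisj (fun J' _ => cube_measurable _ _)]
      apply measure_mono
      apply Set.iUnion₂_subset
      intro J' hJ'
      exact (hF J' (Finset.mem_filter.1 hJ').1).2
    have hreal : (∑ J' ∈ Fib, (ω (DyadicCube n J'.1 J'.2)).toReal)
        ≤ (ω (DyadicCube n J.1 J.2)).toReal := by
      rw [← ENNReal.toReal_sum hfin]
      exact ENNReal.toReal_le_toReal (ne_top_of_le_ne_top (cube_measure_lt_top ω _ _).ne hsum)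
        (cube_measure_lt_top ω _ _).ne |>.2 hsum
    have hdiv : (∑ J' ∈ Fib, (ω (DyadicCube n J'.1 J'.2)).toReal) /
        (ω (DyadicCube n J.1 J.2)).toReal ≤ 1 :=
      div_le_one_of_le₀ hreal ENNReal.toReal_nonneg
    calc (2:ℝ)^(k' - J.1) * ((∑ J' ∈ Fib, (ω (DyadicCube n J'.1 J'.2)).toReal) /
          (ω (DyadicCube n J.1 J.2)).toReal)
        ≤ (2:ℝ)^(k' - J.1) * 1 := by
          apply mul_le_mul_of_nonneg_left hdiv (by positivity)
      _ = (2:ℝ)^(k' - J.1) := mul_one _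
  calc ∑ k' ∈ F.image Prod.fst, ∑ J' ∈ F.filter (fun J' => J'.1 = k'),
        (2:ℝ)^(J'.1 - J.1) *
          ((ω (DyadicCube n J'.1 J'.2)).toReal / (ω (DyadicCube n J.1 J.2)).toReal)
      ≤ ∑ k' ∈ F.image Prod.fst, (2:ℝ)^(k' - J.1) := Finset.sum_le_sum step1
    _ ≤ 1 := by
        apply geom_aux
        intro k hk
        obtain ⟨J', hJ', rfl⟩ := Finset.mem_image.1 hk
        exact (hF J' hJ').1

lemma claimB {n : ℕ} (J' : ℤ × (Fin n → ℤ)) (F : Finset (ℤ × (Fin n → ℤ)))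
    (hF : ∀ J ∈ F, J'.1 < J.1 ∧ DyadicCube n J'.1 J'.2 ⊆ DyadicCube n J.1 J.2) :
    ∑ J ∈ F, (2:ℝ)^(J'.1 - J.1) ≤ 1 := by
  classical
  have hinj : ∀ a ∈ F, ∀ b ∈ F, a.1 = b.1 → a = b := by
    intro a ha b hb hab
    by_contra hne
    have h2 : a.2 ≠ b.2 := fun h => hne (Prod.ext hab h)
    have hd : Disjoint (DyadicCube n a.1 a.2) (DyadicCube n b.1 b.2) := by
      rw [← hab]
      exact cube_disjoint_same_scale h2
    have hc := cube_nonempty J'.1 J'.2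
    exact Set.disjoint_left.1 hd ((hF a ha).2 hc) ((hF b hb).2 hc)
  rw [show (∑ J ∈ F, (2:ℝ)^(J'.1 - J.1)) = ∑ k ∈ F.image Prod.fst, (2:ℝ)^(J'.1 - k) from
    (Finset.sum_image (f := fun k => (2:ℝ)^(J'.1 - k)) hinj).symm]
  apply geom_aux'
  intro k hk
  obtain ⟨J, hJ, rfl⟩ := Finset.mem_image.1 hk
  exact (hF J hJ).1

end AO
/-- Almost orthogonality: if each `g_J` is supported in the dyadic cube `J`, has
vanishing `ω`-mean, and nested pairs satisfy
`|∫ g_J g_{J'} dω| ≤ 2^{-m} √(|J'|_ω/|J|_ω) ‖g_{J'}‖ ‖g_J‖` when `ℓ(J') = 2^{-m} ℓ(J)`,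
then `‖Σ g_J‖² ≤ C Σ ‖g_J‖²`. -/
theorem almost_orthogonality (n : ℕ) :
    ∃ C : ℝ, 0 < C ∧
      ∀ (ω : Measure (Fin n → ℝ)), IsLocallyFiniteMeasure ω →
      ∀ (S : Finset (ℤ × (Fin n → ℤ))) (g : ℤ × (Fin n → ℤ) → (Fin n → ℝ) → ℝ),
        (∀ J ∈ S, Measurable (g J)) →
        (∀ J ∈ S, MemLp (g J) 2 ω) →
        (∀ J ∈ S, ∀ x, x ∉ DyadicCube n J.1 J.2 → g J x = 0) →
        (∀ J ∈ S, ∫ x, g J x ∂ω = 0) →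
        (∀ J ∈ S, ∀ J' ∈ S, J'.1 < J.1 →
          DyadicCube n J'.1 J'.2 ⊆ DyadicCube n J.1 J.2 →
          |∫ x, g J x * g J' x ∂ω| ≤
            (2 : ℝ) ^ (J'.1 - J.1) *
              Real.sqrt ((ω (DyadicCube n J'.1 J'.2)).toReal /
                (ω (DyadicCube n J.1 J.2)).toReal) *
              Real.sqrt (∫ x, (g J' x) ^ 2 ∂ω) * Real.sqrt (∫ x, (g J x) ^ 2 ∂ω)) →
        ∫ x, (∑ J ∈ S, g J x) ^ 2 ∂ω ≤ C * ∑ J ∈ S, ∫ x, (g J x) ^ 2 ∂ω := by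
  classical
  refine ⟨3, by norm_num, ?_⟩
  intro ω hω S g hmeas hL2 hsupp hmean hpair
  haveI := hω
  -- abbreviation for L² norms squared
  set A : ℤ × (Fin n → ℤ) → ℝ := fun J => ∫ x, (g J x)^2 ∂ω with hA
  have hA0 : ∀ J, 0 ≤ A J := fun J => integral_nonneg fun x => sq_nonneg _
  -- integrability of products
  have hInt : ∀ J ∈ S, ∀ J' ∈ S, Integrable (fun x => g J x * g J' x) ω := by
    intro J hJ J' hJ'
    have h1 : Integrable (fun x => (g J x + g J' x)^2) ω :=
      ((hL2 J hJ).add (hL2 J' hJ')).integrable_sq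
    have h2 := (hL2 J hJ).integrable_sq
    have h3 := (hL2 J' hJ').integrable_sq
    have heq : (fun x => g J x * g J' x)
        = fun x => ((g J x + g J' x)^2 - (g J x)^2 - (g J' x)^2) / 2 := by
      funext x; ring
    rw [heq]
    exact ((h1.sub h2).sub h3).div_const 2
  -- expansion of the square
  have hexp : ∫ x, (∑ J ∈ S, g J x)^2 ∂ω
      = ∑ J ∈ S, ∑ J' ∈ S, ∫ x, g J x * g J' x ∂ω := by
    have hpt : ∀ x, (∑ J ∈ S, g J x)^2 = ∑ J ∈ S, ∑ J' ∈ S, g J x * g J' x := by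
      intro x; rw [sq, Finset.sum_mul_sum]
    simp_rw [hpt]
    rw [integral_finset_sum S (fun J hJ =>
      integrable_finset_sum S (fun J' hJ' => hInt J hJ J' hJ'))]
    exact Finset.sum_congr rfl fun J hJ =>
      integral_finset_sum S fun J' hJ' => hInt J hJ J' hJ'
  -- the bound function
  set bnd : ℤ × (Fin n → ℤ) → ℤ × (Fin n → ℤ) → ℝ := fun J J' =>
    (2:ℝ)^(J'.1 - J.1) *
      ((ω (DyadicCube n J'.1 J'.2)).toReal / (ω (DyadicCube n J.1 J.2)).toReal) * (A J / 2)
    + (2:ℝ)^(J'.1 - J.1) * (A J' / 2) with hbnd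
  -- strict-scale comparison
  have hlt : ∀ J ∈ S, ∀ J' ∈ S, J'.1 < J.1 →
      (∫ x, g J x * g J' x ∂ω) ≤
        (if J'.1 < J.1 ∧ DyadicCube n J'.1 J'.2 ⊆ DyadicCube n J.1 J.2
          then bnd J J' else 0) := by
    intro J hJ J' hJ' hscale
    by_cases hsub : DyadicCube n J'.1 J'.2 ⊆ DyadicCube n J.1 J.2
    · rw [if_pos ⟨hscale, hsub⟩]
      have hb := hpair J hJ J' hJ' hscale hsub
      set t : ℝ := (ω (DyadicCube n J'.1 J'.2)).toReal / (ω (DyadicCube n J.1 J.2)).toReal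
        with ht
      have ht0 : 0 ≤ t := div_nonneg ENNReal.toReal_nonneg ENNReal.toReal_nonneg
      have hst : Real.sqrt t ^ 2 = t := Real.sq_sqrt ht0
      have hsA : Real.sqrt (A J) ^ 2 = A J := Real.sq_sqrt (hA0 J)
      have hsA' : Real.sqrt (A J') ^ 2 = A J' := Real.sq_sqrt (hA0 J')
      have hA'eq : (∫ x, (g J' x)^2 ∂ω) = A J' := by rw [hA]
      have hAeq : (∫ x, (g J x)^2 ∂ω) = A J := by rw [hA]
      rw [hA'eq, hAeq] at hb
      have h2e : (0:ℝ) < (2:ℝ)^(J'.1 - J.1) := by positivity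
      have key : Real.sqrt t * Real.sqrt (A J') * Real.sqrt (A J)
          ≤ t * (A J / 2) + A J' / 2 := by
        nlinarith [sq_nonneg (Real.sqrt t * Real.sqrt (A J) - Real.sqrt (A J')),
          Real.sqrt_nonneg t, Real.sqrt_nonneg (A J), Real.sqrt_nonneg (A J')]
      calc (∫ x, g J x * g J' x ∂ω) ≤ |∫ x, g J x * g J' x ∂ω| := le_abs_self _
        _ ≤ (2:ℝ)^(J'.1 - J.1) * Real.sqrt t * Real.sqrt (A J') * Real.sqrt (A J) := hb
        _ = (2:ℝ)^(J'.1 - J.1) * (Real.sqrt t * Real.sqrt (A J') * Real.sqrt (A J)) := by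
            ring
        _ ≤ (2:ℝ)^(J'.1 - J.1) * (t * (A J / 2) + A J' / 2) :=
            mul_le_mul_of_nonneg_left key h2e.le
        _ = bnd J J' := by rw [hbnd]; ring
    · rw [if_neg (fun h => hsub h.2)]
      have hdisj : Disjoint (DyadicCube n J'.1 J'.2) (DyadicCube n J.1 J.2) := by
        by_contra hnd
        exact hsub (AO.cube_nested_of_inter hscale hnd)
      have hz : ∀ x, g J x * g J' x = 0 := by
        intro x
        by_cases hx : x ∈ DyadicCube n J'.1 J'.2
        · rw [hsupp J hJ x (Set.disjoint_left.1 hdisj hx), zero_mul]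
        · rw [hsupp J' hJ' x hx, mul_zero]
      have : (∫ x, g J x * g J' x ∂ω) = 0 := by
        simp_rw [hz]; exact integral_zero _ _
      rw [this]
  -- pointwise pair bound
  have key : ∀ J ∈ S, ∀ J' ∈ S, (∫ x, g J x * g J' x ∂ω) ≤
      (if J = J' then A J else 0)
      + (if J'.1 < J.1 ∧ DyadicCube n J'.1 J'.2 ⊆ DyadicCube n J.1 J.2
          then bnd J J' else 0)
      + (if J.1 < J'.1 ∧ DyadicCube n J.1 J.2 ⊆ DyadicCube n J'.1 J'.2
          then bnd J' J else 0) := by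
    intro J hJ J' hJ'
    rcases lt_trichotomy J'.1 J.1 with hc | hc | hc
    · have hne : J ≠ J' := fun h => absurd (congrArg Prod.fst h) (by omega)
      have h3 : (if J.1 < J'.1 ∧ DyadicCube n J.1 J.2 ⊆ DyadicCube n J'.1 J'.2
          then bnd J' J else 0) = 0 := if_neg (fun h => absurd h.1 (by omega))
      rw [if_neg hne, h3, zero_add, add_zero]
      exact hlt J hJ J' hJ' hc
    · by_cases hJJ : J = J'
      · subst hJJ
        have hg1 : ¬(J.1 < J.1 ∧ DyadicCube n J.1 J.2 ⊆ DyadicCube n J.1 J.2) :=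
          fun h => lt_irrefl _ h.1
        rw [if_pos rfl, if_neg hg1, add_zero, add_zero]
        have : (∫ x, g J x * g J x ∂ω) = A J := by
          rw [hA]; simp_rw [← sq]
        rw [this]
      · have hm : J.2 ≠ J'.2 := fun h => hJJ (Prod.ext hc.symm h)
        have hdisj : Disjoint (DyadicCube n J.1 J.2) (DyadicCube n J'.1 J'.2) := by
          rw [hc]
          exact AO.cube_disjoint_same_scale hm
        have hz : ∀ x, g J x * g J' x = 0 := by
          intro x
          by_cases hx : x ∈ DyadicCube n J.1 J.2
          · rw [hsupp J' hJ' x (Set.disjoint_left.1 hdisj hx), mul_zero]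
          · rw [hsupp J hJ x hx, zero_mul]
        have hz' : (∫ x, g J x * g J' x ∂ω) = 0 := by
          simp_rw [hz]; exact integral_zero _ _
        rw [hz', if_neg hJJ, if_neg (fun h => absurd h.1 (by omega)),
          if_neg (fun h => absurd h.1 (by omega))]
        norm_num
    · have hne : J ≠ J' := fun h => absurd (congrArg Prod.fst h) (by omega)
      have h2 : (if J'.1 < J.1 ∧ DyadicCube n J'.1 J'.2 ⊆ DyadicCube n J.1 J.2
          then bnd J J' else 0) = 0 := if_neg (fun h => absurd h.1 (by omega))
      rw [if_neg hne, h2, zero_add, zero_add]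
      have hswap : (∫ x, g J x * g J' x ∂ω) = ∫ x, g J' x * g J x ∂ω := by
        congr 1; funext x; ring
      rw [hswap]
      exact hlt J' hJ' J hJ hc
  -- the central estimate for the off-diagonal sums
  have hS2gen : (∑ a ∈ S, ∑ b ∈ S,
      (if b.1 < a.1 ∧ DyadicCube n b.1 b.2 ⊆ DyadicCube n a.1 a.2
        then bnd a b else 0)) ≤ ∑ J ∈ S, A J := by
    have hsplit : ∀ a b : ℤ × (Fin n → ℤ),
        (if b.1 < a.1 ∧ DyadicCube n b.1 b.2 ⊆ DyadicCube n a.1 a.2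
          then bnd a b else 0)
        = (if b.1 < a.1 ∧ DyadicCube n b.1 b.2 ⊆ DyadicCube n a.1 a.2
            then (2:ℝ)^(b.1 - a.1) *
              ((ω (DyadicCube n b.1 b.2)).toReal / (ω (DyadicCube n a.1 a.2)).toReal)
            else 0) * (A a / 2)
          + (if b.1 < a.1 ∧ DyadicCube n b.1 b.2 ⊆ DyadicCube n a.1 a.2
              then (2:ℝ)^(b.1 - a.1) else 0) * (A b / 2) := by
      intro a b
      rw [hbnd]
      split
      · ring
      · simp
    calc (∑ a ∈ S, ∑ b ∈ S,
        (if b.1 < a.1 ∧ DyadicCube n b.1 b.2 ⊆ DyadicCube n a.1 a.2 then bnd a b else 0))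
        = (∑ a ∈ S, ∑ b ∈ S,
            (if b.1 < a.1 ∧ DyadicCube n b.1 b.2 ⊆ DyadicCube n a.1 a.2
              then (2:ℝ)^(b.1 - a.1) *
                ((ω (DyadicCube n b.1 b.2)).toReal / (ω (DyadicCube n a.1 a.2)).toReal)
              else 0) * (A a / 2))
          + (∑ a ∈ S, ∑ b ∈ S,
              (if b.1 < a.1 ∧ DyadicCube n b.1 b.2 ⊆ DyadicCube n a.1 a.2
                then (2:ℝ)^(b.1 - a.1) else 0) * (A b / 2)) := by
          simp_rw [hsplit]
          rw [← Finset.sum_add_distrib]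
          exact Finset.sum_congr rfl fun a _ => by rw [← Finset.sum_add_distrib]
      _ ≤ (∑ a ∈ S, A a / 2) + (∑ b ∈ S, A b / 2) := by
          apply add_le_add
          · apply Finset.sum_le_sum
            intro a _
            rw [← Finset.sum_mul]
            calc (∑ b ∈ S,
                (if b.1 < a.1 ∧ DyadicCube n b.1 b.2 ⊆ DyadicCube n a.1 a.2
                  then (2:ℝ)^(b.1 - a.1) *
                    ((ω (DyadicCube n b.1 b.2)).toReal /
                      (ω (DyadicCube n a.1 a.2)).toReal)
                  else 0)) * (A a / 2)
                ≤ 1 * (A a / 2) := by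
                  apply mul_le_mul_of_nonneg_right _ (by linarith [hA0 a])
                  rw [← Finset.sum_filter]
                  exact AO.claimA ω a _ (fun b hb => (Finset.mem_filter.1 hb).2)
              _ = A a / 2 := one_mul _
          · rw [Finset.sum_comm]
            apply Finset.sum_le_sum
            intro b _
            rw [← Finset.sum_mul]
            calc (∑ a ∈ S,
                (if b.1 < a.1 ∧ DyadicCube n b.1 b.2 ⊆ DyadicCube n a.1 a.2
                  then (2:ℝ)^(b.1 - a.1) else 0)) * (A b / 2)
                ≤ 1 * (A b / 2) := by
                  apply mul_le_mul_of_nonneg_right _ (by linarith [hA0 b])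
                  rw [← Finset.sum_filter]
                  exact AO.claimB b _ (fun a ha => (Finset.mem_filter.1 ha).2)
              _ = A b / 2 := one_mul _
      _ = ∑ J ∈ S, A J := by
          rw [← Finset.sum_add_distrib]
          exact Finset.sum_congr rfl fun J _ => by ring
  -- assemble
  calc ∫ x, (∑ J ∈ S, g J x)^2 ∂ω
      = ∑ J ∈ S, ∑ J' ∈ S, ∫ x, g J x * g J' x ∂ω := hexp
    _ ≤ ∑ J ∈ S, ∑ J' ∈ S,
        ((if J = J' then A J else 0)
          + (if J'.1 < J.1 ∧ DyadicCube n J'.1 J'.2 ⊆ DyadicCube n J.1 J.2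
              then bnd J J' else 0)
          + (if J.1 < J'.1 ∧ DyadicCube n J.1 J.2 ⊆ DyadicCube n J'.1 J'.2
              then bnd J' J else 0)) :=
        Finset.sum_le_sum fun J hJ => Finset.sum_le_sum fun J' hJ' => key J hJ J' hJ'
    _ = (∑ J ∈ S, ∑ J' ∈ S, (if J = J' then A J else 0))
        + (∑ J ∈ S, ∑ J' ∈ S,
            (if J'.1 < J.1 ∧ DyadicCube n J'.1 J'.2 ⊆ DyadicCube n J.1 J.2
              then bnd J J' else 0))
        + (∑ J ∈ S, ∑ J' ∈ S,
            (if J.1 < J'.1 ∧ DyadicCube n J.1 J.2 ⊆ DyadicCube n J'.1 J'.2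
              then bnd J' J else 0)) := by
        rw [← Finset.sum_add_distrib, ← Finset.sum_add_distrib]
        refine Finset.sum_congr rfl fun J _ => ?_
        rw [← Finset.sum_add_distrib, ← Finset.sum_add_distrib]
    _ ≤ (∑ J ∈ S, A J) + (∑ J ∈ S, A J) + (∑ J ∈ S, A J) := by
        apply add_le_add
        apply add_le_add
        · apply le_of_eq
          refine Finset.sum_congr rfl fun J hJ => ?_
          rw [Finset.sum_ite_eq S J (fun _ => A J), if_pos hJ]
        · exact hS2gen
        · rw [Finset.sum_comm]
          exact hS2gen
    _ = 3 * ∑ J ∈ S, A J := by ring
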